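/- Let n be a primitive non-deficient positive integer with prime factorization n = p₁^{a₁} p₂^{a₂} ⋯ p_k^{a_k} where p₁ < p₂ < ⋯ < p_k are primes. Assume all exponents a_i are even except for exactly one index t for which a_t is odd, and assume (p_t + 2)/2 ≥ p₁ ≥ 11. Then T(n) < log 2 − 11/(50 p₁²). -/

import Mathlib

open Real Finset

/-- `T n` is the sum of the reciprocals of the distinct primes dividing `n`. -/
noncomputable def T (n : ℕ) : ℝ := ∑ p ∈ n.primeFactors, (1 : ℝ) / p

/-- `n` is non-deficient if `σ(n)/n ≥ 2`. -/
def NonDeficient (n : ℕ) : Prop := 2 * n ≤ ArithmeticFunction.sigma 1 n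

/-- `n` is primitive non-deficient if it is non-deficient and no proper divisor is
non-deficient. -/
def PrimitiveNonDeficient (n : ℕ) : Prop :=
  NonDeficient n ∧ ∀ d : ℕ, d ∣ n → d ≠ n → ¬ NonDeficient d

lemma logA' {x : ℝ} (h0 : 0 ≤ x) (h1 : x ≤ 1) : x - x^2/2 ≤ Real.log (1+x) := by
  have hx1 : (0:ℝ) < 1 + x := by linarith
  rw [Real.le_log_iff_exp_le hx1]
  have hb := Real.exp_bound' h0 h1 (n := 3) (by norm_num)
  have h2 : Real.exp x ≤ 1 + x + x^2/2 + x^3/2 := by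
    simp [Finset.sum_range_succ, Nat.factorial] at hb
    nlinarith [pow_nonneg h0 3]
  have h3 : 1 + x^2/2 ≤ Real.exp (x^2/2) := by
    have := Real.add_one_le_exp (x^2/2); linarith
  have e1 : Real.exp x ≤ (1+x) * Real.exp (x^2/2) := by
    calc Real.exp x ≤ 1 + x + x^2/2 + x^3/2 := h2
    _ = (1+x)*(1+x^2/2) := by ring
    _ ≤ (1+x)*Real.exp (x^2/2) := by
        apply mul_le_mul_of_nonneg_left h3 (by linarith)
  have hdiv : Real.exp (x - x^2/2) = Real.exp x / Real.exp (x^2/2) := Real.exp_sub _ _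
  rw [hdiv, div_le_iff₀ (Real.exp_pos _)]
  exact e1

lemma logC' {x : ℝ} (h0 : 0 < x) (h1 : x ≤ 1/11) : x + (2/5)*x^2 ≤ Real.log (1+x+x^2) := by
  have hy0 : 0 ≤ x + x^2 := by positivity
  have hy1 : x + x^2 ≤ 1 := by nlinarith
  have h := logA' hy0 hy1
  have hrw : 1 + (x + x^2) = 1 + x + x^2 := by ring
  rw [hrw] at h
  have key : (0:ℝ) ≤ 1/5 - 2*x - x^2 := by nlinarith
  nlinarith [mul_nonneg (sq_nonneg x) key]

lemma geom_aux (q c : ℕ) :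
    q * ∑ k ∈ Finset.range c, q ^ k + 1 = ∑ k ∈ Finset.range (c+1), q ^ k := by
  rw [Finset.sum_range_succ' (fun k => q ^ k) c, Finset.mul_sum]
  simp [pow_succ, mul_comm]

lemma prim_bound {n q : ℕ} (hn : 0 < n) (hpnd : PrimitiveNonDeficient n)
    (hq : q.Prime) (ha : 2 ≤ n.factorization q) :
    ((ArithmeticFunction.sigma 1 n : ℕ) : ℝ) < (2 + 2/((q:ℝ)^2 + q)) * n := by
  set a := n.factorization q with hadef
  obtain ⟨b, hb⟩ : ∃ b, a = b + 1 := ⟨a - 1, by omega⟩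
  have hr : q ^ a * (n / q ^ a) = n := Nat.ordProj_mul_ordCompl_eq_self n q
  set r := n / q ^ a with hrdef
  have hco : Nat.Coprime q r := Nat.coprime_ordCompl hq hn.ne'
  set m := q ^ b * r with hmdef
  have hmn : m * q = n := by rw [← hr, hb]; ring
  have hm0 : 0 < m := by
    rcases Nat.eq_zero_or_pos m with h | h
    · exfalso; rw [h, zero_mul] at hmn; omega
    · exact h
  have hmdvd : m ∣ n := ⟨q, hmn.symm⟩
  have hmne : m ≠ n := by
    intro h
    have : m < m * q := lt_mul_iff_one_lt_right hm0 |>.mpr hq.one_lt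
    omega
  have hdef : ArithmeticFunction.sigma 1 m < 2 * m :=
    Nat.lt_of_not_le (hpnd.2 m hmdvd hmne)
  have hσn : ArithmeticFunction.sigma 1 n
      = ArithmeticFunction.sigma 1 (q ^ a) * ArithmeticFunction.sigma 1 r := by
    rw [← hr]
    exact ArithmeticFunction.isMultiplicative_sigma.map_mul_of_coprime (hco.pow_left _)
  have hσm : ArithmeticFunction.sigma 1 m
      = ArithmeticFunction.sigma 1 (q ^ b) * ArithmeticFunction.sigma 1 r :=
    ArithmeticFunction.isMultiplicative_sigma.map_mul_of_coprime (hco.pow_left _)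
  set s := ArithmeticFunction.sigma 1 (q ^ a) with hsdef
  set s' := ArithmeticFunction.sigma 1 (q ^ b) with hs'def
  have hgeom : q * s' + 1 = s := by
    rw [hsdef, hs'def, ArithmeticFunction.sigma_one_apply_prime_pow hq,
      ArithmeticFunction.sigma_one_apply_prime_pow hq, hb]
    exact geom_aux q (b+1)
  have hs3 : q ^ 2 + q + 1 ≤ s := by
    have hsub : Finset.range 3 ⊆ Finset.range (a + 1) := by
      apply Finset.range_subset_range.mpr; omega
    have h3 := Finset.sum_le_sum_of_subset (f := fun k => q ^ k) hsub
    rw [hsdef, ArithmeticFunction.sigma_one_apply_prime_pow hq]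
    calc q ^ 2 + q + 1 = ∑ k ∈ Finset.range 3, q ^ k := by
          simp [Finset.sum_range_succ]; ring
      _ ≤ _ := h3
  have hspos : 0 < s := by omega
  have hkey : ArithmeticFunction.sigma 1 n * (q * s') < 2 * s * n := by
    have h1 : ArithmeticFunction.sigma 1 n * s' = s * ArithmeticFunction.sigma 1 m := by
      rw [hσn, hσm]; ring
    have h2 : s * ArithmeticFunction.sigma 1 m < s * (2 * m) :=
      mul_lt_mul_of_pos_left hdef hspos
    calc ArithmeticFunction.sigma 1 n * (q * s')
        = (ArithmeticFunction.sigma 1 n * s') * q := by ring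
      _ = (s * ArithmeticFunction.sigma 1 m) * q := by rw [h1]
      _ < (s * (2 * m)) * q := mul_lt_mul_of_pos_right h2 hq.pos
      _ = 2 * s * (m * q) := by ring
      _ = 2 * s * n := by rw [hmn]
  have hA : (q:ℝ) * s' = (s:ℝ) - 1 := by
    have : ((q:ℝ) * s' + 1) = (s:ℝ) := by exact_mod_cast congrArg (fun x : ℕ => (x:ℝ)) hgeom
    linarith
  have hApos : (0:ℝ) < (q:ℝ)^2 + q := by
    have : (0:ℝ) < (q:ℝ) := by exact_mod_cast hq.pos
    positivity
  have hAge : (q:ℝ)^2 + q ≤ (s:ℝ) - 1 := by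
    have : ((q:ℝ)^2 + q + 1) ≤ (s:ℝ) := by exact_mod_cast hs3
    linarith
  have hkeyR : (ArithmeticFunction.sigma 1 n : ℝ) * ((s:ℝ) - 1) < 2 * s * n := by
    rw [← hA]; exact_mod_cast hkey
  have hn0 : (0:ℝ) < n := by exact_mod_cast hn
  have hs1' : (0:ℝ) < (s:ℝ) - 1 := by linarith
  have hstep : (ArithmeticFunction.sigma 1 n : ℝ) < (2 + 2/((s:ℝ)-1)) * n := by
    rw [← mul_lt_mul_iff_of_pos_right hs1']
    have h2s : (2:ℝ) * s = (2 + 2/((s:ℝ)-1)) * ((s:ℝ)-1) := by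
      field_simp; ring
    calc (ArithmeticFunction.sigma 1 n : ℝ) * ((s:ℝ)-1) < 2 * s * n := hkeyR
      _ = (2 + 2/((s:ℝ)-1)) * ((s:ℝ)-1) * n := by rw [← h2s]
      _ = (2 + 2/((s:ℝ)-1)) * n * ((s:ℝ)-1) := by ring
  have hmono : 2/((s:ℝ)-1) ≤ 2/((q:ℝ)^2+q) :=
    div_le_div_of_nonneg_left (by norm_num) hApos hAge
  calc ((ArithmeticFunction.sigma 1 n : ℕ) : ℝ) < (2 + 2/((s:ℝ)-1)) * n := hstep
    _ ≤ (2 + 2/((q:ℝ)^2 + q)) * n := by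
        apply mul_le_mul_of_nonneg_right _ hn0.le
        linarith

set_option maxHeartbeats 1000000 in
theorem stmt_1 (n : ℕ) (hn : 0 < n) (hpnd : PrimitiveNonDeficient n)
    (t : ℕ) (ht : t ∈ n.primeFactors) (htodd : Odd (n.factorization t))
    (heven : ∀ p ∈ n.primeFactors, p ≠ t → Even (n.factorization p))
    (hpt : ((t : ℝ) + 2) / 2 ≥ (n.minFac : ℝ)) (hp1 : 11 ≤ n.minFac) :
    T n < Real.log 2 - 11 / (50 * (n.minFac : ℝ) ^ 2) := by
  by_contra hcon
  push_neg at hcon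
  have hne : n ≠ 0 := hn.ne'
  have hn1 : n ≠ 1 := by
    intro h; rw [h] at ht; simp at ht
  -- basic data
  have hp1prime : n.minFac.Prime := Nat.minFac_prime hn1
  have hp1mem : n.minFac ∈ n.primeFactors :=
    Nat.mem_primeFactors.mpr ⟨hp1prime, Nat.minFac_dvd n, hne⟩
  set X : ℝ := (n.minFac : ℝ) with hXdef
  set Z : ℝ := (t : ℝ) with hZdef
  have hX11 : (11:ℝ) ≤ X := by rw [hXdef]; exact_mod_cast hp1
  have hZX : 2*X - 2 ≤ Z := by linarith [hpt]
  have hZ20 : (20:ℝ) ≤ Z := by linarith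
  have hp1net : n.minFac ≠ t := by
    intro h
    have : X = Z := by rw [hXdef, hZdef, h]
    linarith
  -- prime factors facts
  have hfact : ∀ p ∈ n.primeFactors, p.Prime := fun p hp => Nat.prime_of_mem_primeFactors hp
  have h11 : ∀ p ∈ n.primeFactors, (11:ℝ) ≤ (p:ℝ) := by
    intro p hp
    have h1 : n.minFac ≤ p :=
      Nat.minFac_le_of_dvd (hfact p hp).two_le (Nat.dvd_of_mem_primeFactors hp)
    have : 11 ≤ p := le_trans hp1 h1
    exact_mod_cast this
  have hppos : ∀ p ∈ n.primeFactors, (0:ℝ) < (p:ℝ) := by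
    intro p hp; linarith [h11 p hp]
  have hapos : ∀ p ∈ n.primeFactors, 0 < n.factorization p := by
    intro p hp
    exact Nat.Prime.factorization_pos_of_dvd (hfact p hp) hne (Nat.dvd_of_mem_primeFactors hp)
  -- the local factors
  set f : ℕ → ℝ := fun p =>
    ((ArithmeticFunction.sigma 1 (p ^ n.factorization p) : ℕ) : ℝ)
      / (p:ℝ) ^ (n.factorization p) with hfdef
  set E : Finset ℕ := n.primeFactors.erase t with hEdef
  have hp1E : n.minFac ∈ E := Finset.mem_erase.mpr ⟨hp1net, hp1mem⟩
  have hEne : E.Nonempty := ⟨_, hp1E⟩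
  set q : ℕ := E.max' hEne with hqdef
  have hqE : q ∈ E := E.max'_mem hEne
  have hqP : q ∈ n.primeFactors := Finset.mem_of_mem_erase hqE
  have hqprime : q.Prime := hfact q hqP
  set Y : ℝ := (q:ℝ) with hYdef
  have hY11 : (11:ℝ) ≤ Y := h11 q hqP
  have hY0 : (0:ℝ) < Y := by linarith
  -- lower bounds on factors
  have hflb2 : ∀ p ∈ E, 1 + 1/(p:ℝ) + (1/(p:ℝ))^2 ≤ f p := by
    intro p hpE
    have hpP : p ∈ n.primeFactors := Finset.mem_of_mem_erase hpE
    have hpr := hfact p hpP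
    have hppos' := hppos p hpP
    have he : Even (n.factorization p) := heven p hpP (Finset.ne_of_mem_erase hpE)
    have h2 : 2 ≤ n.factorization p := by
      obtain ⟨c, hc⟩ := he
      have := hapos p hpP
      omega
    obtain ⟨b, hbdef⟩ : ∃ b, n.factorization p = b + 2 := ⟨n.factorization p - 2, by omega⟩
    have hnat : p^b + p^(b+1) + p^(b+2)
        ≤ ArithmeticFunction.sigma 1 (p ^ n.factorization p) := by
      rw [hbdef, ArithmeticFunction.sigma_one_apply_prime_pow hpr]
      rw [Finset.sum_range_succ, Finset.sum_range_succ, Finset.sum_range_succ]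
      have h0 : 0 ≤ ∑ k ∈ Finset.range b, p ^ k := Nat.zero_le _
      omega
    have hcast : (p:ℝ)^b + (p:ℝ)^(b+1) + (p:ℝ)^(b+2)
        ≤ ((ArithmeticFunction.sigma 1 (p ^ n.factorization p) : ℕ) : ℝ) := by
      exact_mod_cast hnat
    have hform : ((p:ℝ)^b + (p:ℝ)^(b+1) + (p:ℝ)^(b+2)) / (p:ℝ)^(b+2)
        = 1 + 1/(p:ℝ) + (1/(p:ℝ))^2 := by
      field_simp
      ring
    have hfp : f p = ((ArithmeticFunction.sigma 1 (p ^ n.factorization p) : ℕ) : ℝ)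
        / (p:ℝ)^(b+2) := by
      rw [hfdef]; simp only []; rw [hbdef]
    rw [hfp, ← hform]
    gcongr
  have hflbt : 1 + 1/Z ≤ f t := by
    have hpr := hfact t ht
    have hZ0 : (0:ℝ) < Z := by linarith
    obtain ⟨c, hcdef⟩ : ∃ c, n.factorization t = c + 1 :=
      ⟨n.factorization t - 1, by have := hapos t ht; omega⟩
    have hnat : t^c + t^(c+1) ≤ ArithmeticFunction.sigma 1 (t ^ n.factorization t) := by
      rw [hcdef, ArithmeticFunction.sigma_one_apply_prime_pow hpr]
      rw [Finset.sum_range_succ, Finset.sum_range_succ]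
      omega
    have hcast : (t:ℝ)^c + (t:ℝ)^(c+1)
        ≤ ((ArithmeticFunction.sigma 1 (t ^ n.factorization t) : ℕ) : ℝ) := by
      exact_mod_cast hnat
    have hform : ((t:ℝ)^c + (t:ℝ)^(c+1)) / (t:ℝ)^(c+1) = 1 + 1/Z := by
      rw [hZdef] at hZ0 ⊢; field_simp; ring
    have hfp : f t = ((ArithmeticFunction.sigma 1 (t ^ n.factorization t) : ℕ) : ℝ)
        / (t:ℝ)^(c+1) := by
      rw [hfdef]; simp only []; rw [hcdef]
    rw [hfp, ← hform]
    gcongr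
  have hfpos : ∀ p ∈ n.primeFactors, 0 < f p := by
    intro p hp
    rcases eq_or_ne p t with h | h
    · subst h
      have : (0:ℝ) < 1 + 1/Z := by positivity
      linarith [hflbt]
    · have hpE : p ∈ E := Finset.mem_erase.mpr ⟨h, hp⟩
      have := hflb2 p hpE
      have h0 := hppos p hp
      have : (0:ℝ) < 1 + 1/(p:ℝ) + (1/(p:ℝ))^2 := by positivity
      linarith [hflb2 p hpE]
  -- product identities
  have hσprod : ((ArithmeticFunction.sigma 1 n : ℕ) : ℝ)
      = ∏ p ∈ n.primeFactors,
        ((ArithmeticFunction.sigma 1 (p ^ n.factorization p) : ℕ) : ℝ) := by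
    have h1 : ArithmeticFunction.sigma 1 n = ∏ p ∈ n.primeFactors,
        ArithmeticFunction.sigma 1 (p ^ n.factorization p) := by
      rw [ArithmeticFunction.sigma_one_apply, Nat.sum_divisors hne]
      exact Finset.prod_congr rfl fun p hp =>
        (ArithmeticFunction.sigma_one_apply_prime_pow (Nat.prime_of_mem_primeFactors hp)).symm
    rw [h1]; push_cast; rfl
  have hnprod : (n:ℝ) = ∏ p ∈ n.primeFactors, (p:ℝ) ^ n.factorization p := by
    have h := Nat.factorization_prod_pow_eq_self hne
    rw [Finsupp.prod, Nat.support_factorization] at h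
    conv_lhs => rw [← h]
    push_cast; rfl
  have hhf : ((ArithmeticFunction.sigma 1 n : ℕ) : ℝ) / (n:ℝ) = ∏ p ∈ n.primeFactors, f p := by
    rw [hσprod, hnprod, ← Finset.prod_div_distrib]
  have hlogprod : Real.log (((ArithmeticFunction.sigma 1 n : ℕ) : ℝ) / (n:ℝ))
      = ∑ p ∈ n.primeFactors, Real.log (f p) := by
    rw [hhf]
    exact Real.log_prod (fun p hp => (hfpos p hp).ne')
  -- per prime log bounds
  have claim1 : ∀ p ∈ E, 1/(p:ℝ) + (2/5) * (1/(p:ℝ))^2 ≤ Real.log (f p) := by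
    intro p hpE
    have hpP : p ∈ n.primeFactors := Finset.mem_of_mem_erase hpE
    have hp0 := hppos p hpP
    have hx0 : 0 < 1/(p:ℝ) := by positivity
    have hx11 : 1/(p:ℝ) ≤ 1/11 := by
      apply one_div_le_one_div_of_le (by norm_num) (h11 p hpP)
    have hlc := logC' hx0 hx11
    have hmono : Real.log (1 + 1/(p:ℝ) + (1/(p:ℝ))^2) ≤ Real.log (f p) := by
      apply Real.log_le_log (by positivity) (hflb2 p hpE)
    linarith
  have claim2 : 1/Z ≤ Real.log (f t) + (1/2) * (1/Z)^2 := by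
    have hZ0 : (0:ℝ) < Z := by linarith
    have hx0 : 0 ≤ 1/Z := by positivity
    have hx1 : 1/Z ≤ 1 := by
      rw [div_le_one hZ0]; linarith
    have hla := logA' hx0 hx1
    have hmono : Real.log (1 + 1/Z) ≤ Real.log (f t) := by
      apply Real.log_le_log (by positivity) hflbt
    linarith
  -- sums
  set SE : ℝ := ∑ p ∈ E, 1/(p:ℝ) with hSEdef
  set S2 : ℝ := ∑ p ∈ E, (1/(p:ℝ))^2 with hS2def
  set LE : ℝ := ∑ p ∈ E, Real.log (f p) with hLEdef
  have hTsplit : T n = 1/Z + SE := by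
    rw [hZdef, hSEdef, hEdef]
    have := Finset.add_sum_erase n.primeFactors (fun p => (1:ℝ)/p) ht
    rw [T]
    simp only [one_div] at this ⊢
    rw [← this]
  have hLsplit : ∑ p ∈ n.primeFactors, Real.log (f p) = Real.log (f t) + LE := by
    rw [hLEdef, hEdef]
    exact (Finset.add_sum_erase n.primeFactors _ ht).symm
  have hsumE : SE + (2/5) * S2 ≤ LE := by
    have h := Finset.sum_le_sum claim1
    rw [Finset.sum_add_distrib, ← Finset.mul_sum] at h
    exact h
  -- S2 lower bound
  have hqmax : ∀ p ∈ E, (p:ℝ) ≤ Y := by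
    intro p hp
    have := Finset.le_max' E p hp
    rw [hYdef]
    exact_mod_cast this
  have hS2lb : 1/X^2 + (1/Y) * (SE - 1/X) ≤ S2 := by
    have hsplit2 : S2 = (1/X)^2 + ∑ p ∈ E.erase n.minFac, (1/(p:ℝ))^2 := by
      rw [hS2def]
      exact (Finset.add_sum_erase E _ hp1E).symm
    have hsplit3 : SE = 1/X + ∑ p ∈ E.erase n.minFac, 1/(p:ℝ) := by
      rw [hSEdef]
      exact (Finset.add_sum_erase E _ hp1E).symm
    have hterm : ∀ p ∈ E.erase n.minFac, (1/Y) * (1/(p:ℝ)) ≤ (1/(p:ℝ))^2 := by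
      intro p hp
      have hpE := Finset.mem_of_mem_erase hp
      have hpP := Finset.mem_of_mem_erase hpE
      have hp0 := hppos p hpP
      have hple := hqmax p hpE
      have hYp : (0:ℝ) < Y * p := by positivity
      have h1 : (1/Y) * (1/(p:ℝ)) = 1/(Y * p) := by
        rw [div_mul_div_comm, one_mul]
      have h2 : (1/(p:ℝ))^2 = 1/((p:ℝ)*(p:ℝ)) := by
        rw [div_pow, one_pow, sq]
      rw [h1, h2]
      apply one_div_le_one_div_of_le (by positivity)
      nlinarith
    have hs := Finset.sum_le_sum hterm
    rw [← Finset.mul_sum] at hs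
    have heq : SE - 1/X = ∑ p ∈ E.erase n.minFac, 1/(p:ℝ) := by linarith
    rw [heq]
    have hXsq : 1/X^2 = (1/X)^2 := by
      rw [div_pow, one_pow]
    rw [hXsq]
    linarith
  -- primitivity bound at q
  have hq2 : 2 ≤ n.factorization q := by
    have he : Even (n.factorization q) := heven q hqP (Finset.ne_of_mem_erase hqE)
    obtain ⟨c, hc⟩ := he
    have := hapos q hqP
    omega
  have hprim := prim_bound hn hpnd hqprime hq2
  have hn0R : (0:ℝ) < n := by exact_mod_cast hn
  have hσpos : (0:ℝ) < ((ArithmeticFunction.sigma 1 n : ℕ) : ℝ) := by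
    have h := hpnd.1
    rw [NonDeficient] at h
    have : (2 * n : ℕ) ≤ (ArithmeticFunction.sigma 1 n : ℕ) := h
    have h2 : ((2 * n : ℕ) : ℝ) ≤ ((ArithmeticFunction.sigma 1 n : ℕ) : ℝ) := by exact_mod_cast this
    push_cast at h2
    linarith
  have hW0 : (0:ℝ) < Y^2 + Y := by positivity
  have hlogh : Real.log (((ArithmeticFunction.sigma 1 n : ℕ) : ℝ) / (n:ℝ))
      ≤ Real.log 2 + 1/(Y^2+Y) := by
    have h1 : ((ArithmeticFunction.sigma 1 n : ℕ) : ℝ) / (n:ℝ) ≤ 2 * (1 + 1/(Y^2+Y)) := by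
      rw [div_le_iff₀ hn0R]
      calc ((ArithmeticFunction.sigma 1 n : ℕ) : ℝ) ≤ (2 + 2/(Y^2 + Y)) * n := hprim.le
        _ = 2 * (1 + 1/(Y^2+Y)) * n := by ring
    have hpos1 : (0:ℝ) < 1 + 1/(Y^2+Y) := by positivity
    calc Real.log (((ArithmeticFunction.sigma 1 n : ℕ) : ℝ) / (n:ℝ))
        ≤ Real.log (2 * (1 + 1/(Y^2+Y))) := Real.log_le_log (by positivity) h1
      _ = Real.log 2 + Real.log (1 + 1/(Y^2+Y)) := Real.log_mul (by norm_num) hpos1.ne'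
      _ ≤ Real.log 2 + 1/(Y^2+Y) := by
          have := Real.log_le_sub_one_of_pos hpos1
          linarith
  -- numeric endgame
  have h1X : 1/X ≤ 1/11 := one_div_le_one_div_of_le (by norm_num) hX11
  have h1Z : 1/Z ≤ 1/20 := one_div_le_one_div_of_le (by norm_num) hZ20
  have hX0 : (0:ℝ) < X := by linarith
  have hXsqb : 11/(50*X^2) ≤ 11/6050 := by
    apply div_le_div_of_nonneg_left (by norm_num) (by norm_num) (by nlinarith)
  have hlog2 : (0.6931471803 : ℝ) < Real.log 2 := Real.log_two_gt_d9
  have hA4 : (1/4 : ℝ) ≤ SE - 1/X := by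
    have hT : Real.log 2 - 11/(50*X^2) ≤ T n := hcon
    linarith [hTsplit]
  have hprodb : (1/Y) * (1/4) ≤ (1/Y) * (SE - 1/X) := by
    apply mul_le_mul_of_nonneg_left hA4 (by positivity)
  have hYfin : 1/(Y^2+Y) < (1/10) * (1/Y) := by
    have h10Y : (0:ℝ) < 10*Y := by linarith
    have heq : (1/10 : ℝ) * (1/Y) = 1/(10*Y) := by
      rw [div_mul_div_comm, one_mul]
    rw [heq]
    apply one_div_lt_one_div_of_lt h10Y
    nlinarith
  have hZfin : (1/2) * (1/Z)^2 ≤ (9/50) * (1/X)^2 := by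
    have hZ0 : (0:ℝ) < Z := by linarith
    have e1 : (1/2 : ℝ) * (1/Z)^2 = 1/(2*Z^2) := by
      field_simp
    have e2 : (9/50 : ℝ) * (1/X)^2 = 9/(50*X^2) := by
      field_simp
    rw [e1, e2]
    rw [div_le_div_iff₀ (by positivity) (by positivity)]
    nlinarith [sq_nonneg (X - 11)]
  have hXeq : 11/(50*X^2) = (11/50) * (1/X)^2 := by
    field_simp
  have hX2eq : 1/X^2 = (1/X)^2 := by rw [div_pow, one_pow]
  -- final chain
  have hfinal : T n ≤ Real.log 2 + 1/(Y^2+Y) + (1/2)*(1/Z)^2 - (2/5)*S2 := by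
    have hsum : ∑ p ∈ n.primeFactors, Real.log (f p)
        ≤ Real.log 2 + 1/(Y^2+Y) := by
      rw [← hlogprod]; exact hlogh
    rw [hLsplit] at hsum
    linarith [hTsplit, hsumE, claim2]
  rw [hXeq] at hcon
  rw [hX2eq] at hS2lb
  linarith [hfinal, hS2lb, hprodb, hYfin, hZfin, hcon]
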